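/- arXiv:2103.00758 — 4 statements merged into one kernel-verified Lean document; each statement's English description precedes it below -/
import Mathlib

section
/- For every integer P ≥ 2 there exists N such that for all n ≥ N: every n-length code A capable of correcting all 3P-far deletable error patterns satisfies R(A) ≥ n/(64(3P+6)) - 3. -/
/-- The three kinds of deletable errors: deletion, erasure, substitution (flip). -/
inductive ErrKind : Type
  | D
  | E
  | F
  deriving DecidableEq

instance : Fintype ErrKind where
  elems := {ErrKind.D, ErrKind.E, ErrKind.F}
  complete := by intro x; cases x <;> decide

/-- A binary word of length `n`. -/
abbrev Word (n : ℕ) := Fin n → Bool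

/-- A deletable error pattern of length `n`: a pair `(e, v)`. -/
abbrev Pattern (n : ℕ) := (Fin n → Bool) × (Fin n → ErrKind)

/-- Process a list of (bit, error indicator, error kind) triples in order,
producing the corrupted string over `{0, 1, ε}` (`none` is the erasure symbol). -/
def corruptAux : List (Bool × Bool × ErrKind) → List (Option Bool)
  | [] => []
  | (xi, false, _) :: rest => some xi :: corruptAux rest
  | (_, true, ErrKind.D) :: rest => corruptAux rest
  | (_, true, ErrKind.E) :: rest => none :: corruptAux rest
  | (xi, true, ErrKind.F) :: rest => some (!xi) :: corruptAux rest

/-- The corruption `F_g(x)` of the word `x` by the pattern `g`. -/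
def corrupt {n : ℕ} (g : Pattern n) (x : Word n) : List (Option Bool) :=
  corruptAux (List.ofFn fun i => (x i, g.1 i, g.2 i))

/-- The corruption `F_g(x, t)` of the first `t` bits of `x` by the first `t` entries of `g`. -/
def corruptPrefix {n : ℕ} (g : Pattern n) (x : Word n) (t : ℕ) : List (Option Bool) :=
  corruptAux ((List.ofFn fun i => (x i, g.1 i, g.2 i)).take t)

/-- The number of errors `Σ_i e_i` of a pattern. -/
def errCount {n : ℕ} (g : Pattern n) : ℕ :=
  (Finset.univ.filter fun i => g.1 i = true).card

/-- `E_n(r)`: the set of `n`-length deletable error patterns with at most `r` errors. -/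
def Epat (n r : ℕ) : Finset (Pattern n) :=
  Finset.univ.filter fun g => errCount g ≤ r

/-- A pattern is `P`-far if any two distinct error positions are at distance at least `P`. -/
def IsPFar {n : ℕ} (P : ℕ) (g : Pattern n) : Prop :=
  ∀ i j : Fin n, i ≠ j → g.1 i = true → g.1 j = true →
    (P : ℤ) ≤ |((i : ℕ) : ℤ) - ((j : ℕ) : ℤ)|

/-- The code `C` corrects all error patterns in `F`. -/
def CorrectsIn {n : ℕ} (C : Finset (Word n)) (F : Set (Pattern n)) : Prop :=
  ∀ x₁ ∈ C, ∀ x₂ ∈ C, x₁ ≠ x₂ → ∀ g₁ ∈ F, ∀ g₂ ∈ F, corrupt g₁ x₁ ≠ corrupt g₂ x₂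

/-- The code `C` corrects all error patterns in `F` in real-time with delay at most `d`. -/
def CorrectsRealTime {n : ℕ} (C : Finset (Word n)) (F : Set (Pattern n)) (d : ℕ) : Prop :=
  ∀ z : ℕ, 1 ≤ z → z ≤ n - d → ∀ x₁ ∈ C, ∀ x₂ ∈ C, x₁ ≠ x₂ →
    ∀ g₁ ∈ F, ∀ g₂ ∈ F, corruptPrefix g₁ x₁ (z + d) ≠ corruptPrefix g₂ x₂ (z + d)

/-- The redundancy `R(C) = n - log₂ #C` of an `n`-length code `C`. -/
noncomputable def redundancy {n : ℕ} (C : Finset (Word n)) : ℝ :=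
  (n : ℝ) - Real.logb 2 (C.card)

/-- `corruptAux` on a list where every error kind is `F` just xors each bit
with its error indicator. -/
lemma corruptAux_allF (l : List (Bool × Bool)) :
    corruptAux (l.map fun p => (p.1, p.2, ErrKind.F)) =
      l.map fun p => some (xor p.2 p.1) := by
  induction l with
  | nil => rfl
  | cons p t ih =>
    obtain ⟨b, e⟩ := p
    cases e <;> simp [corruptAux, ih]

/-- Corruption by an all-substitution pattern. -/
lemma corrupt_allF {n : ℕ} (e : Fin n → Bool) (x : Word n) :
    corrupt (e, fun _ => ErrKind.F) x = List.ofFn fun i => some (xor (e i) (x i)) := by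
  unfold corrupt
  have h1 : (List.ofFn fun i : Fin n => (x i, e i, ErrKind.F)) =
      (List.ofFn fun i : Fin n => (x i, e i)).map (fun p => (p.1, p.2, ErrKind.F)) := by
    rw [List.map_ofFn]; rfl
  rw [h1, corruptAux_allF, List.map_ofFn]
  rfl

/-- Counting multiples of `q` among `Fin n`. -/
lemma card_multiples_le (n q : ℕ) (hq : 0 < q) (hn : 0 < n) :
    n / q ≤ (Finset.univ.filter fun i : Fin n => q ∣ (i : ℕ)).card := by
  rw [← Finset.card_range (n / q)]
  apply Finset.card_le_card_of_injOn
    (f := fun k : ℕ => (⟨k * q % n, Nat.mod_lt _ hn⟩ : Fin n))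
  · intro k hk
    have hk' : k + 1 ≤ n / q := Finset.mem_range.mp hk
    have hlt : (k + 1) * q ≤ n := (Nat.le_div_iff_mul_le hq).mp hk'
    have hkq : k * q < n := lt_of_lt_of_le (by nlinarith) hlt
    simp [Nat.mod_eq_of_lt hkq, Dvd.intro k rfl]
  · intro a ha b hb hab
    have ha' : a * q < n := by
      have := (Nat.le_div_iff_mul_le hq).mp (Finset.mem_range.mp ha)
      nlinarith
    have hb' : b * q < n := by
      have := (Nat.le_div_iff_mul_le hq).mp (Finset.mem_range.mp hb)
      nlinarith
    have : a * q = b * q := by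
      simpa [Fin.ext_iff, Nat.mod_eq_of_lt ha', Nat.mod_eq_of_lt hb'] using hab
    exact Nat.eq_of_mul_eq_mul_right hq this

/-- Redundancy lower bound for codes correcting all `3P`-far deletable error patterns,
fixed `P` (converse part of Theorem 1 of the paper). -/
theorem stmt2 (P : ℕ) (hP : 2 ≤ P) :
    ∃ N : ℕ, ∀ n : ℕ, N ≤ n → ∀ A : Finset (Word n),
      CorrectsIn A {g : Pattern n | IsPFar (3 * P) g} →
      (n : ℝ) / (64 * (3 * (P : ℝ) + 6)) - 3 ≤ redundancy A := by
  refine ⟨1, fun n hn A hA => ?_⟩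
  set q : ℕ := 3 * P with hq_def
  have hq : 0 < q := by omega
  have hn0 : 0 < n := hn
  -- the error pattern used for codeword x : flip the bits of x at multiples of q that are 1
  set epat : Word n → (Fin n → Bool) :=
    fun x i => decide (q ∣ (i : ℕ)) && x i with hepat
  -- each such pattern is q-far
  have hfar : ∀ x : Word n, IsPFar q (epat x, fun _ => ErrKind.F) := by
    intro x i j hij hi hj
    have hdi : q ∣ (i : ℕ) := by
      by_contra h; simp [hepat, h] at hi
    have hdj : q ∣ (j : ℕ) := by
      by_contra h; simp [hepat, h] at hj
    have hne : ((i : ℕ) : ℤ) - ((j : ℕ) : ℤ) ≠ 0 := by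
      intro h
      apply hij
      exact Fin.ext (by omega)
    have hdvd : (q : ℤ) ∣ ((i : ℕ) : ℤ) - ((j : ℕ) : ℤ) :=
      dvd_sub (Int.natCast_dvd_natCast.mpr hdi) (Int.natCast_dvd_natCast.mpr hdj)
    exact Int.le_of_dvd (abs_pos.mpr hne) ((dvd_abs _ _).mpr hdvd)
  -- corruption of x under its pattern zeroes out the multiples of q
  have hcor : ∀ x : Word n, corrupt (epat x, fun _ => ErrKind.F) x =
      List.ofFn fun i : Fin n => some (if q ∣ (i : ℕ) then false else x i) := by
    intro x
    rw [corrupt_allF]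
    congr 1
    funext i
    by_cases h : q ∣ (i : ℕ) <;> cases hx : x i <;> simp [hepat, h, hx]
  -- hence codewords are determined by their values on non-multiples of q
  have hinj : Set.InjOn
      (fun (x : Word n) (i : {i : Fin n // ¬ q ∣ (i : ℕ)}) => x i.1) A := by
    intro x₁ h₁ x₂ h₂ heq
    by_contra hne
    apply hA x₁ h₁ x₂ h₂ hne (epat x₁, fun _ => ErrKind.F) (hfar x₁)
      (epat x₂, fun _ => ErrKind.F) (hfar x₂)
    rw [hcor x₁, hcor x₂]
    congr 1
    funext i
    by_cases h : q ∣ (i : ℕ)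
    · simp [h]
    · simp [h]
      exact congrFun heq ⟨i, h⟩
  -- cardinality bound
  set s : ℕ := (Finset.univ.filter fun i : Fin n => q ∣ (i : ℕ)).card with hs_def
  have hsn : s ≤ n := by
    rw [hs_def]
    exact le_trans (Finset.card_filter_le _ _) (by simp)
  have hcard : A.card ≤ 2 ^ (n - s) := by
    have h1 : A.card ≤ Fintype.card ({i : Fin n // ¬ q ∣ (i : ℕ)} → Bool) := by
      rw [← Finset.card_univ]
      exact Finset.card_le_card_of_injOn _ (fun _ _ => Finset.mem_univ _) hinj
    have h2 : Fintype.card ({i : Fin n // ¬ q ∣ (i : ℕ)} → Bool) = 2 ^ (n - s) := by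
      rw [Fintype.card_fun, Fintype.card_bool, Fintype.card_subtype]
      congr 1
      have := Finset.card_filter_add_card_filter_not
        (s := (Finset.univ : Finset (Fin n))) (p := fun i : Fin n => q ∣ (i : ℕ))
      simp only [Finset.card_univ, Fintype.card_fin] at this
      omega
    omega
  -- redundancy bound : redundancy A ≥ s
  have hlog : Real.logb 2 (A.card : ℝ) ≤ ((n - s : ℕ) : ℝ) := by
    rcases Nat.eq_zero_or_pos A.card with h | h
    · have h0 : Real.logb 2 ((A.card : ℕ) : ℝ) = 0 := by rw [h]; simp
      rw [h0]
      positivity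
    · calc Real.logb 2 (A.card : ℝ) ≤ Real.logb 2 ((2 : ℝ) ^ (n - s)) := by
            apply Real.logb_le_logb_of_le (by norm_num : (1:ℝ) < 2)
              (by exact_mod_cast h)
            exact_mod_cast hcard
        _ = ((n - s : ℕ) : ℝ) := by
            rw [Real.logb_pow]
            simp
  have hred : (s : ℝ) ≤ redundancy A := by
    unfold redundancy
    have : ((n - s : ℕ) : ℝ) = (n : ℝ) - s := by
      push_cast [Nat.cast_sub hsn]; ring
    linarith [hlog, this ▸ hlog]
  -- arithmetic : n/(64(3P+6)) - 3 ≤ s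
  have hsq : n / q ≤ s := hs_def ▸ card_multiples_le n q hq hn0
  have hdivreal : (n : ℝ) / q - 1 ≤ ((n / q : ℕ) : ℝ) := by
    have h1 : n < (n / q + 1) * q := by nlinarith [Nat.div_add_mod n q, Nat.mod_lt n hq]
    have h2 : (n : ℝ) < (((n / q : ℕ) : ℝ) + 1) * q := by exact_mod_cast h1
    have hq' : (0 : ℝ) < q := by exact_mod_cast hq
    rw [div_sub_one (ne_of_gt hq'), div_le_iff₀ hq']
    nlinarith
  have hqle : (q : ℝ) ≤ 64 * (3 * (P : ℝ) + 6) := by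
    have : (q : ℝ) = 3 * P := by rw [hq_def]; push_cast; ring
    have hP' : (2 : ℝ) ≤ P := by exact_mod_cast hP
    nlinarith
  have hmono : (n : ℝ) / (64 * (3 * (P : ℝ) + 6)) ≤ (n : ℝ) / q := by
    apply div_le_div_of_nonneg_left (by positivity) (by exact_mod_cast hq) hqle
  have hsq' : ((n / q : ℕ) : ℝ) ≤ (s : ℝ) := by exact_mod_cast hsq
  linarith
end

section
/- Let P ≥ 5 and n ≥ 2P be integers, and write n = tP + s with t ≥ 2 and 0 ≤ s ≤ P - 1. Suppose a₁ and a₂ satisfy #VT_{a₁}(P) ≥ 2^P/(2P+1) and #VT_{a₂}(P+s) ≥ 2^{P+s}/(2(P+s)+1). Then the code C_far(a₁,a₂,P,s,n) satisfies #C_far ≥ 2^n · ((1-δ(P))/(2P+1))^{n/P - 1} · 1/(4P), where δ(P) = (2P+1)/2^{P-1}. -/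
/-- The modified Varshamov–Tenengolts code
`VT_a(m) = {x ∈ {0,1}^m : Σ_{i=1}^m i·x_i ≡ a (mod 2m+1)}`. -/
def VTcode (a m : ℕ) : Finset (Fin m → Bool) :=
  Finset.univ.filter fun x =>
    (∑ i : Fin m, ((i : ℕ) + 1) * (if x i then 1 else 0)) % (2 * m + 1) = a % (2 * m + 1)

/-- The `j`-th inner block (of length `P`) of a word of length `(t-1)*P + (P+s)`. -/
def innerBlock (P s t : ℕ) (x : Fin ((t - 1) * P + (P + s)) → Bool) (j : Fin (t - 1)) :
    Fin P → Bool :=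
  fun i => x ⟨(j : ℕ) * P + (i : ℕ), by
    have h1 : (j : ℕ) * P + (i : ℕ) < ((j : ℕ) + 1) * P := by
      rw [Nat.succ_mul]; exact Nat.add_lt_add_left i.isLt _
    have h2 : ((j : ℕ) + 1) * P ≤ (t - 1) * P := Nat.mul_le_mul_right _ j.isLt
    omega⟩

/-- The final block (of length `P+s`) of a word of length `(t-1)*P + (P+s)`. -/
def finalBlock (P s t : ℕ) (x : Fin ((t - 1) * P + (P + s)) → Bool) : Fin (P + s) → Bool :=
  fun i => x ⟨(t - 1) * P + (i : ℕ), Nat.add_lt_add_left i.isLt _⟩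

/-- The code `C_far(a₁, a₂, P, s, n)` with `n = t*P + s`: concatenations of `t-1` words from
`VT_{a₁}(P) \ {all-zero, all-one}` followed by a word from `VT_{a₂}(P+s)`. -/
def Cfar (a₁ a₂ P s t : ℕ) : Finset (Fin ((t - 1) * P + (P + s)) → Bool) :=
  Finset.univ.filter fun x =>
    (∀ j : Fin (t - 1), innerBlock P s t x j ∈ VTcode a₁ P ∧
      innerBlock P s t x j ≠ (fun _ => false) ∧ innerBlock P s t x j ≠ (fun _ => true)) ∧
    finalBlock P s t x ∈ VTcode a₂ (P + s)

def recon (P s t : ℕ) (f : Fin (t - 1) → Fin P → Bool) (g : Fin (P + s) → Bool) :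
    Fin ((t - 1) * P + (P + s)) → Bool := fun i =>
  if h : (i : ℕ) < (t - 1) * P then
    f ⟨(i : ℕ) / P, by
        have hP : 0 < P := by
          rcases Nat.eq_zero_or_pos P with h0 | h0
          · have hm : (t - 1) * P = 0 := by rw [h0, Nat.mul_zero]
            omega
          · exact h0
        exact (Nat.div_lt_iff_lt_mul hP).2 h⟩
      ⟨(i : ℕ) % P, Nat.mod_lt _ (by
        rcases Nat.eq_zero_or_pos P with h0 | h0
        · have hm : (t - 1) * P = 0 := by rw [h0, Nat.mul_zero]
          omega
        · exact h0)⟩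
  else g ⟨(i : ℕ) - (t - 1) * P, by have := i.isLt; omega⟩

lemma recon_left (P s t : ℕ) (x : Fin ((t - 1) * P + (P + s)) → Bool) :
    recon P s t (innerBlock P s t x) (finalBlock P s t x) = x := by
  funext i
  unfold recon innerBlock finalBlock
  split
  · next h =>
    congr 1
    apply Fin.ext
    simp only []
    exact Nat.div_add_mod' _ _
  · next h =>
    congr 1
    apply Fin.ext
    have := i.isLt
    simp; omega

lemma inner_recon (P s t : ℕ) (f : Fin (t - 1) → Fin P → Bool) (g : Fin (P + s) → Bool)
    (j : Fin (t - 1)) : innerBlock P s t (recon P s t f g) j = f j := by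
  funext i
  have hP : 0 < P := i.pos
  unfold innerBlock recon
  have hlt : (j : ℕ) * P + (i : ℕ) < (t - 1) * P := by
    have h1 : (j : ℕ) * P + (i : ℕ) < ((j : ℕ) + 1) * P := by
      rw [Nat.succ_mul]; exact Nat.add_lt_add_left i.isLt _
    have h2 : ((j : ℕ) + 1) * P ≤ (t - 1) * P := Nat.mul_le_mul_right _ j.isLt
    omega
  rw [dif_pos hlt]
  congr 1 <;> apply Fin.ext <;> simp only []
  · rw [add_comm, Nat.add_mul_div_right _ _ hP, Nat.div_eq_of_lt i.isLt, Nat.zero_add]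
  · rw [add_comm, Nat.add_mul_mod_self_right, Nat.mod_eq_of_lt i.isLt]

lemma final_recon (P s t : ℕ) (f : Fin (t - 1) → Fin P → Bool) (g : Fin (P + s) → Bool) :
    finalBlock P s t (recon P s t f g) = g := by
  funext i
  unfold finalBlock recon
  rw [dif_neg (by simp)]
  congr 1
  apply Fin.ext
  simp

lemma card_Cfar (a₁ a₂ P s t : ℕ) :
    (Cfar a₁ a₂ P s t).card =
      ((VTcode a₁ P).filter fun y => y ≠ (fun _ => false) ∧ y ≠ (fun _ => true)).card ^ (t - 1)
        * (VTcode a₂ (P + s)).card := by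
  classical
  set S := (VTcode a₁ P).filter fun y => y ≠ (fun _ => false) ∧ y ≠ (fun _ => true) with hS
  have : (Cfar a₁ a₂ P s t).card =
      ((Fintype.piFinset fun _ : Fin (t - 1) => S) ×ˢ VTcode a₂ (P + s)).card := by
    apply Finset.card_bij
      (fun x _ => ((fun j => innerBlock P s t x j, finalBlock P s t x)))
    · intro x hx
      simp only [Cfar, Finset.mem_filter, Finset.mem_univ, true_and] at hx
      simp only [Finset.mem_product, Fintype.mem_piFinset, hS, Finset.mem_filter]
      exact ⟨fun j => ⟨(hx.1 j).1, (hx.1 j).2⟩, hx.2⟩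
    · intro x hx y hy h
      have h1 := congrArg Prod.fst h
      have h2 := congrArg Prod.snd h
      simp only at h1 h2
      have : recon P s t (fun j => innerBlock P s t x j) (finalBlock P s t x) =
          recon P s t (fun j => innerBlock P s t y j) (finalBlock P s t y) := by rw [h1, h2]
      rwa [recon_left, recon_left] at this
    · rintro ⟨f, g⟩ hfg
      simp only [Finset.mem_product, Fintype.mem_piFinset, hS, Finset.mem_filter] at hfg
      refine ⟨recon P s t f g, ?_, ?_⟩
      · simp only [Cfar, Finset.mem_filter, Finset.mem_univ, true_and]
        constructor
        · intro j
          rw [inner_recon]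
          exact ⟨(hfg.1 j).1, (hfg.1 j).2⟩
        · rw [final_recon]; exact hfg.2
      · simp only [Prod.mk.injEq]
        constructor
        · funext j; rw [inner_recon]
        · rw [final_recon]
  rw [this, Finset.card_product, Fintype.card_piFinset]
  simp

lemma two_mul_lt_pow (P : ℕ) (hP : 5 ≤ P) : 2 * P + 1 < 2 ^ (P - 1) := by
  induction P with
  | zero => omega
  | succ m ih =>
    rcases Nat.lt_or_ge m 5 with h | h
    · interval_cases m <;> simp_all
    · have := ih (by omega)
      have hm : m + 1 - 1 = (m - 1) + 1 := by omega
      rw [hm, pow_succ]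
      omega

lemma card_filter_ge (a₁ P : ℕ) :
    (VTcode a₁ P).card ≤
      ((VTcode a₁ P).filter fun y => y ≠ (fun _ => false) ∧ y ≠ (fun _ => true)).card + 2 := by
  classical
  have hEq : ((VTcode a₁ P).filter fun y => y ≠ (fun _ => false) ∧ y ≠ (fun _ => true)) =
      VTcode a₁ P \ ({(fun _ => false), (fun _ => true)} : Finset (Fin P → Bool)) := by
    ext y
    simp [Finset.mem_sdiff, Finset.mem_filter, and_assoc]
  rw [hEq]
  have h1 := Finset.card_le_card_sdiff_add_card (s := VTcode a₁ P)
    (t := ({(fun _ => false), (fun _ => true)} : Finset (Fin P → Bool)))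
  have h2 : ({(fun _ => false), (fun _ => true)} : Finset (Fin P → Bool)).card ≤ 2 :=
    (Finset.card_insert_le _ _).trans (by simp)
  omega


/-- Size lower bound for the code `C_far`. -/
theorem stmt6 (P s t n a₁ a₂ : ℕ) (hP : 5 ≤ P) (hn2 : 2 * P ≤ n) (ht : 2 ≤ t)
    (hs : s ≤ P - 1) (hn : n = t * P + s)
    (ha₁ : (2 : ℝ) ^ P / (2 * (P : ℝ) + 1) ≤ ((VTcode a₁ P).card : ℝ))
    (ha₂ : (2 : ℝ) ^ (P + s) / (2 * ((P : ℝ) + s) + 1) ≤ ((VTcode a₂ (P + s)).card : ℝ)) :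
    (2 : ℝ) ^ n *
        ((1 - (2 * (P : ℝ) + 1) / 2 ^ (P - 1)) / (2 * (P : ℝ) + 1)) ^ ((n : ℝ) / P - 1) *
        (1 / (4 * (P : ℝ))) ≤ ((Cfar a₁ a₂ P s t).card : ℝ) := by
  classical
  set S := (VTcode a₁ P).filter fun y => y ≠ (fun _ => false) ∧ y ≠ (fun _ => true) with hSdef
  set base : ℝ := (1 - (2 * (P : ℝ) + 1) / 2 ^ (P - 1)) / (2 * (P : ℝ) + 1) with hbasedef
  have hp0 : (0 : ℝ) < P := by
    have : (0 : ℕ) < P := by omega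
    exact_mod_cast this
  have hP1 : (0 : ℝ) < 2 * (P : ℝ) + 1 := by linarith
  have hpow1 : (0 : ℝ) < 2 ^ (P - 1) := by positivity
  have hδ : (2 * (P : ℝ) + 1) / 2 ^ (P - 1) < 1 := by
    rw [div_lt_one hpow1]
    have := two_mul_lt_pow P hP
    exact_mod_cast this
  have hbase0 : 0 < base := div_pos (by linarith) hP1
  have hbase1 : base ≤ 1 := by
    rw [hbasedef, div_le_one hP1]
    have : (0 : ℝ) ≤ (2 * (P : ℝ) + 1) / 2 ^ (P - 1) := by positivity
    linarith
  -- exponent comparison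
  have htR : ((t - 1 : ℕ) : ℝ) = (t : ℝ) - 1 := by
    have h1 : (1 : ℕ) ≤ t := by omega
    push_cast [Nat.cast_sub h1]
    ring
  have hexp : ((t - 1 : ℕ) : ℝ) ≤ (n : ℝ) / P - 1 := by
    rw [htR, sub_le_sub_iff_right, le_div_iff₀ hp0]
    have h1 : t * P ≤ n := by omega
    have h2 : ((t * P : ℕ) : ℝ) ≤ (n : ℝ) := by exact_mod_cast h1
    push_cast at h2
    linarith
  have hr1 : base ^ ((n : ℝ) / P - 1) ≤ base ^ ((t - 1 : ℕ) : ℝ) :=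
    Real.rpow_le_rpow_of_exponent_ge hbase0 hbase1 hexp
  rw [Real.rpow_natCast] at hr1
  -- denominator comparison
  have hsP : s + 1 ≤ P := by omega
  have hsPR : (s : ℝ) + 1 ≤ (P : ℝ) := by exact_mod_cast hsP
  have hd1 : (0 : ℝ) < 2 * ((P : ℝ) + s) + 1 := by positivity
  have hinv : 1 / (4 * (P : ℝ)) ≤ 1 / (2 * ((P : ℝ) + s) + 1) :=
    one_div_le_one_div_of_le hd1 (by linarith)
  -- bound on S.card
  have hA2 : ((VTcode a₁ P).card : ℝ) ≤ (S.card : ℝ) + 2 := by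
    have := card_filter_ge a₁ P
    exact_mod_cast this
  have h2P : (2 : ℝ) ^ P = 2 * 2 ^ (P - 1) := by
    rw [← pow_succ']
    congr 1
    omega
  have hid : (2 : ℝ) ^ P * base = (2 : ℝ) ^ P / (2 * (P : ℝ) + 1) - 2 := by
    rw [hbasedef, h2P]
    field_simp
  have hA : (2 : ℝ) ^ P * base ≤ (S.card : ℝ) := by
    rw [hid]; linarith
  -- card formula
  have hcard : ((Cfar a₁ a₂ P s t).card : ℝ) =
      (S.card : ℝ) ^ (t - 1) * ((VTcode a₂ (P + s)).card : ℝ) := by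
    rw [card_Cfar]
    push_cast
    ring
  have hmul : (t - 1) * P + P = t * P := by
    rw [← Nat.succ_mul]
    congr 1
    omega
  have hn' : n = (t - 1) * P + (P + s) := by omega
  have h2n : (2 : ℝ) ^ n = ((2 : ℝ) ^ P) ^ (t - 1) * 2 ^ (P + s) := by
    rw [hn', pow_add, mul_comm (t - 1) P, pow_mul]
  calc (2 : ℝ) ^ n * base ^ ((n : ℝ) / P - 1) * (1 / (4 * (P : ℝ)))
      ≤ (2 : ℝ) ^ n * base ^ (t - 1) * (1 / (2 * ((P : ℝ) + s) + 1)) := by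
        apply mul_le_mul (mul_le_mul_of_nonneg_left hr1 (by positivity)) hinv
          (by positivity)
          (mul_nonneg (by positivity) (pow_nonneg hbase0.le _))
    _ = ((2 : ℝ) ^ P * base) ^ (t - 1) * ((2 : ℝ) ^ (P + s) / (2 * ((P : ℝ) + s) + 1)) := by
        rw [h2n, mul_pow]
        ring
    _ ≤ (S.card : ℝ) ^ (t - 1) * ((VTcode a₂ (P + s)).card : ℝ) := by
        apply mul_le_mul (pow_le_pow_left₀ (mul_nonneg (by positivity) hbase0.le) hA _) ha₂
          (by positivity) (by positivity)
    _ = _ := hcard.symm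
end

section
/- Let n, k, P be positive integers with 2 ≤ k, k² ≤ n and 6P ≤ n. Then the ratio of binomial coefficients satisfies C(n-3P, k)/C(n, k) ≥ 1 - 3Pk/n - 2·(3Pk² + k⁴)/n². -/
set_option maxHeartbeats 1000000

open Finset

/-- Lower bound on the ratio of binomial coefficients `C(n-3P, k)/C(n, k)`. -/
theorem stmt16 (n k P : ℕ) (hn : 0 < n) (hk : 2 ≤ k) (hkn : k ^ 2 ≤ n)
    (hP : 0 < P) (h6P : 6 * P ≤ n) :
    1 - 3 * (P : ℝ) * k / n - 2 * (3 * (P : ℝ) * k ^ 2 + k ^ 4) / n ^ 2 ≤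
      (((n - 3 * P).choose k : ℝ)) / ((n.choose k : ℝ)) := by
  set m := 3 * P with hm
  have h2k : 2 * k ≤ n := by nlinarith
  have h2m : 2 * m ≤ n := by omega
  have hmkn : m + k ≤ n := by omega
  have hN : (0:ℝ) < n := by exact_mod_cast hn
  have hK2 : (2:ℝ) ≤ k := by exact_mod_cast hk
  have hKn : ((k:ℝ))^2 ≤ n := by exact_mod_cast hkn
  have hMn : 2*(m:ℝ) ≤ n := by exact_mod_cast h2m
  have hMKn : (m:ℝ) + k ≤ n := by exact_mod_cast hmkn
  have h2kR : 2*(k:ℝ) ≤ n := by exact_mod_cast h2k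
  have hm0 : (0:ℝ) ≤ m := by positivity
  have hk0 : (0:ℝ) ≤ k := by positivity
  have hden : (0:ℝ) < (n:ℝ) - k + 1 := by nlinarith
  set c : ℝ := 1 - (m:ℝ) / ((n:ℝ) - k + 1) with hc
  have hc0 : 0 ≤ c := by
    rw [hc, sub_nonneg, div_le_one hden]; nlinarith
  -- cast product identities
  have hA : (((n - m).descFactorial k : ℕ) : ℝ) = ∏ i ∈ range k, ((n:ℝ) - m - i) := by
    rw [Nat.descFactorial_eq_prod_range, Nat.cast_prod]
    refine prod_congr rfl fun i hi => ?_
    have hik : i < k := mem_range.mp hi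
    rw [Nat.cast_sub (by omega : i ≤ n - m), Nat.cast_sub (by omega : m ≤ n)]
  have hB : ((n.descFactorial k : ℕ) : ℝ) = ∏ i ∈ range k, ((n:ℝ) - i) := by
    rw [Nat.descFactorial_eq_prod_range, Nat.cast_prod]
    refine prod_congr rfl fun i hi => ?_
    have hik : i < k := mem_range.mp hi
    rw [Nat.cast_sub (by omega : i ≤ n)]
  have hf0 : ((k.factorial : ℕ) : ℝ) ≠ 0 := by positivity
  have hcast : ((n - m).choose k : ℝ) / (n.choose k : ℝ)
      = ∏ i ∈ range k, (((n:ℝ) - m - i) / ((n:ℝ) - i)) := by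
    rw [prod_div_distrib, ← hA, ← hB]
    rw [← mul_div_mul_left ((n - m).choose k : ℝ) (n.choose k : ℝ) hf0]
    congr 1
    · rw [Nat.descFactorial_eq_factorial_mul_choose]; push_cast; ring
    · rw [Nat.descFactorial_eq_factorial_mul_choose]; push_cast; ring
  rw [hcast]
  have hprod : c ^ k ≤ ∏ i ∈ range k, (((n:ℝ) - m - i) / ((n:ℝ) - i)) := by
    calc c ^ k = ∏ _i ∈ range k, c := by rw [prod_const, card_range]
    _ ≤ _ := by
      apply prod_le_prod (fun i _ => hc0)
      intro i hi
      have hik : i < k := mem_range.mp hi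
      have hiR : (i:ℝ) ≤ (k:ℝ) - 1 := by
        have : (i:ℝ) + 1 ≤ k := by exact_mod_cast hik
        linarith
      have hdi : (0:ℝ) < (n:ℝ) - i := by linarith
      have heq : ((n:ℝ) - m - i) / ((n:ℝ) - i) = 1 - (m:ℝ) / ((n:ℝ) - i) := by
        field_simp; ring
      rw [heq, hc]
      have hdiv : (m:ℝ)/((n:ℝ)-i) ≤ (m:ℝ)/((n:ℝ)-k+1) := by
        apply div_le_div_of_nonneg_left hm0 hden
        linarith
      linarith
  refine le_trans ?_ hprod
  -- Bernoulli
  have hb : 1 + (k:ℝ) * (-((m:ℝ) / ((n:ℝ) - k + 1))) ≤ (1 + (-((m:ℝ) / ((n:ℝ) - k + 1)))) ^ k := by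
    apply one_add_mul_le_pow
    have : (m:ℝ) / ((n:ℝ) - k + 1) ≤ 1 := by
      rw [div_le_one hden]; nlinarith
    linarith
  have hb' : 1 - (k:ℝ) * ((m:ℝ) / ((n:ℝ) - k + 1)) ≤ c ^ k := by
    have he : c = 1 + (-((m:ℝ) / ((n:ℝ) - k + 1))) := by rw [hc]; ring
    rw [he]; linarith [hb]
  refine le_trans ?_ hb'
  have hMr : ((m:ℕ):ℝ) = 3 * (P:ℝ) := by rw [hm]; push_cast; ring
  rw [← hMr]
  -- final arithmetic
  have hx : (0:ℝ) ≤ (k:ℝ)*n - 2*(k:ℝ)^2 := by nlinarith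
  have key : (k:ℝ) * ((m:ℝ) / ((n:ℝ) - k + 1))
      ≤ (m:ℝ)*k/n + 2*((m:ℝ)*k^2 + (k:ℝ)^4)/n^2 := by
    have h1 : (k:ℝ) * ((m:ℝ) / ((n:ℝ) - k + 1)) = ((k:ℝ)*m) / ((n:ℝ) - k + 1) := by ring
    have h2 : (m:ℝ)*k/n + 2*((m:ℝ)*k^2 + (k:ℝ)^4)/n^2
        = ((m:ℝ)*k*n + 2*((m:ℝ)*k^2 + (k:ℝ)^4)) / (n:ℝ)^2 := by
      field_simp
    rw [h1, h2, div_le_div_iff₀ hden (by positivity)]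
    have t1 : (0:ℝ) ≤ (m:ℝ)*k*n := mul_nonneg (mul_nonneg hm0 hk0) (le_of_lt hN)
    have t2 : (0:ℝ) ≤ (m:ℝ)*(k:ℝ)^2*(2*((n:ℝ)-k+1)-n) :=
      mul_nonneg (mul_nonneg hm0 (sq_nonneg (k:ℝ))) (by linarith)
    have t3 : (0:ℝ) ≤ (k:ℝ)^4*((n:ℝ)-k+1) := mul_nonneg (pow_nonneg hk0 4) (le_of_lt hden)
    have expand : ((m:ℝ)*k*n + 2*((m:ℝ)*k^2 + (k:ℝ)^4)) * ((n:ℝ)-k+1) - (k:ℝ)*m*n^2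
        = (m:ℝ)*k*n + (m:ℝ)*(k:ℝ)^2*(2*((n:ℝ)-k+1)-n) + 2*((k:ℝ)^4*((n:ℝ)-k+1)) := by ring
    linarith
  linarith
end

section
/- Let n ≥ P ≥ 2 be integers and x ∈ {0,1}^n. For r ≥ 1 call the five bits x_{(3P+5)(r-1)+1},…,x_{(3P+5)(r-1)+5} the r-th 5-window of x, and call it good if its first and last bits are 1 and its middle three bits are 0. Suppose at least m of the 5-windows with 1 ≤ r ≤ ⌊n/(3P+5)⌋ are good. Then the set N(x) of all words obtainable from x by 3P-far deletion-only error patterns (including the pattern with no errors) satisfies #N(x) ≥ 2^m. -/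
/-- Corruption of `x` by a deletion-only error pattern with error indicator `e`:
each bit `x_i` with `e_i = 1` is deleted. -/
def delCorrupt {n : ℕ} (x : Fin n → Bool) (e : Fin n → Bool) : List Bool :=
  ((List.ofFn fun i => (x i, e i)).filter fun p => !p.2).map Prod.fst

/-- An error-indicator word `e` is `P`-far if any two distinct error positions are at
distance at least `P`. -/
def IsPFarE {n : ℕ} (P : ℕ) (e : Fin n → Bool) : Prop :=
  ∀ i j : Fin n, i ≠ j → e i = true → e j = true →
    (P : ℤ) ≤ |((i : ℕ) : ℤ) - ((j : ℕ) : ℤ)|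

/-- `N(x)`: the set of all words obtainable from `x` by `P`-far deletion-only error
patterns (including the pattern with no errors). -/
def Ndel (n P : ℕ) (x : Fin n → Bool) : Set (List Bool) :=
  {w | ∃ e : Fin n → Bool, IsPFarE P e ∧ w = delCorrupt x e}

/-- The `i`-th bit (`0`-based) of a word, defaulting to `false` out of range. -/
def getBit {n : ℕ} (x : Fin n → Bool) (i : ℕ) : Bool :=
  if h : i < n then x ⟨i, h⟩ else false

/-- The `r`-th 5-window (`1`-based) of `x` consists of the five bits at positions
`(3P+5)(r-1)+1, …, (3P+5)(r-1)+5` (1-based); it is good if its first and last bits are `1`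
and its middle three bits are `0`. -/
def goodWindow {n : ℕ} (P : ℕ) (x : Fin n → Bool) (r : ℕ) : Prop :=
  getBit x ((3 * P + 5) * (r - 1)) = true ∧
  getBit x ((3 * P + 5) * (r - 1) + 1) = false ∧
  getBit x ((3 * P + 5) * (r - 1) + 2) = false ∧
  getBit x ((3 * P + 5) * (r - 1) + 3) = false ∧
  getBit x ((3 * P + 5) * (r - 1) + 4) = true

instance {n : ℕ} (P : ℕ) (x : Fin n → Bool) : DecidablePred (goodWindow P x) := fun r => by
  unfold goodWindow; infer_instance

/- ---------- auxiliary ---------- -/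

lemma L1 (l : List (Bool × Bool)) (i : ℕ) (h : i < l.length) (hg : (l[i]'h).2 = false) :
    ((l.filter fun q => !q.2).map Prod.fst)[((l.take i).filter fun q => !q.2).length]?
      = some (l[i]'h).1 := by
  have key : (l.filter fun q => !q.2)
      = ((l.take i).filter fun q => !q.2)
        ++ (((l[i]'h) :: l.drop (i+1)).filter fun q => !q.2) := by
    conv_lhs => rw [← List.take_append_drop i l, List.drop_eq_getElem_cons h]
    rw [List.filter_append]
  rw [key, List.map_append, List.getElem?_append_right (by simp), List.length_map,
    Nat.sub_self]
  have hpos : (fun q : Bool × Bool => !q.2) (l[i]'h) = true := by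
    show (!(l[i]'h).2) = true
    rw [hg]; rfl
  rw [List.filter_cons, if_pos hpos, List.map_cons, List.getElem?_cons_zero]

lemma L2 (l : List (Bool × Bool)) (i : ℕ) (h : i < l.length) (hg : (l[i]'h).2 = true) :
    ((l.take (i+1)).filter fun q => !q.2) = ((l.take i).filter fun q => !q.2) := by
  rw [List.take_succ, List.filter_append]
  have h1 : l[i]? = some (l[i]'h) := List.getElem?_eq_getElem h
  simp [h1, hg]

lemma mul_ne_succ {a b c : ℕ} (ha : 2 ≤ a) : a * b ≠ a * c + 1 := by
  intro h
  have h1 : a ∣ a * b - a * c := Nat.dvd_sub ⟨b, rfl⟩ ⟨c, rfl⟩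
  have h2 : a * b - a * c = 1 := by omega
  rw [h2] at h1
  have := Nat.le_of_dvd one_pos h1
  omega

/-- The error pattern deleting the first bit of every window indexed by `S`. -/
def eDel (P : ℕ) (S : Finset ℕ) {n : ℕ} : Fin n → Bool :=
  fun i => decide (∃ s ∈ S, (3*P+5)*(s-1) = (i:ℕ))

lemma eDel_pfar (n P : ℕ) (S : Finset ℕ) : IsPFarE (3*P) (eDel P S (n := n)) := by
  intro i j hij hi hj
  simp only [eDel, decide_eq_true_eq] at hi hj
  obtain ⟨s, _, hs⟩ := hi
  obtain ⟨t, _, ht⟩ := hj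
  have hst : s - 1 ≠ t - 1 := by
    intro h
    exact hij (Fin.ext (by rw [← hs, ← ht, h]))
  have key : ((3*P+5 : ℕ) : ℤ) * 1 ≤ ((3*P+5 : ℕ) : ℤ) * |((s-1 : ℕ) : ℤ) - ((t-1 : ℕ) : ℤ)| := by
    apply mul_le_mul_of_nonneg_left _ (by positivity)
    exact Int.one_le_abs (sub_ne_zero.mpr (by exact_mod_cast hst))
  have habs : |((i : ℕ) : ℤ) - ((j : ℕ) : ℤ)|
      = ((3*P+5 : ℕ) : ℤ) * |((s-1 : ℕ) : ℤ) - ((t-1 : ℕ) : ℤ)| := by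
    rw [← hs, ← ht, Nat.cast_mul, Nat.cast_mul, ← mul_sub, abs_mul,
      abs_of_nonneg (by positivity : (0:ℤ) ≤ ((3*P+5 : ℕ) : ℤ))]
  rw [habs]
  have : ((3*P : ℕ) : ℤ) ≤ ((3*P+5 : ℕ) : ℤ) * 1 := by push_cast; linarith
  linarith

lemma distinguish (l l' : List (Bool × Bool)) (p : ℕ)
    (hp1 : p + 1 < l.length) (hp0 : p < l'.length)
    (hpref : l.take p = l'.take p)
    (h1 : (l[p]'(by omega)).2 = true)
    (h2 : (l[p+1]'hp1).2 = false)
    (h3 : (l'[p]'hp0).2 = false)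
    (h4 : (l[p+1]'hp1).1 ≠ (l'[p]'hp0).1) :
    (l.filter fun q => !q.2).map Prod.fst ≠ (l'.filter fun q => !q.2).map Prod.fst := by
  intro heq
  have hv := L1 l (p+1) hp1 h2
  have hv' := L1 l' p hp0 h3
  rw [L2 l p (by omega) h1, hpref] at hv
  rw [heq, hv'] at hv
  exact h4 (Option.some.inj hv).symm

lemma ofFn_getElem {n : ℕ} (f : Fin n → Bool × Bool) (i : ℕ) (hi : i < n) :
    (List.ofFn f)[i]'(by simpa using hi) = f ⟨i, hi⟩ := by
  simp [List.getElem_ofFn]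

lemma corrupt_ne {n : ℕ} (P : ℕ) (x : Fin n → Bool) (S S' : Finset ℕ)
    (hS1 : ∀ s ∈ S, 1 ≤ s) (hS1' : ∀ s ∈ S', 1 ≤ s)
    (r : ℕ) (hr1 : 1 ≤ r) (hgood : goodWindow P x r)
    (hrS : r ∈ S) (hrS' : r ∉ S')
    (hagree : ∀ s, s < r → (s ∈ S ↔ s ∈ S')) :
    delCorrupt x (eDel P S) ≠ delCorrupt x (eDel P S') := by
  obtain ⟨g0, g1, g2, g3, g4⟩ := hgood
  set p := (3*P+5) * (r-1) with hp
  have hp4 : p + 4 < n := by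
    by_contra h
    unfold getBit at g4
    rw [dif_neg (by omega)] at g4
    exact Bool.false_ne_true g4
  have hp0 : p < n := by omega
  have hp1 : p + 1 < n := by omega
  have xv0 : x ⟨p, hp0⟩ = true := by
    unfold getBit at g0; rwa [dif_pos hp0] at g0
  have xv1 : x ⟨p+1, hp1⟩ = false := by
    unfold getBit at g1; rwa [dif_pos hp1] at g1
  -- error pattern values
  have heS_p : eDel P S ⟨p, hp0⟩ = true := by
    simp only [eDel, decide_eq_true_eq]
    exact ⟨r, hrS, rfl⟩
  have heS_p1 : eDel P S ⟨p+1, hp1⟩ = false := by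
    simp only [eDel, decide_eq_false_iff_not]
    rintro ⟨s, hsS, hs⟩
    rw [hp] at hs
    exact mul_ne_succ (a := 3*P+5) (by omega) hs
  have heS'_p : eDel P S' ⟨p, hp0⟩ = false := by
    simp only [eDel, decide_eq_false_iff_not]
    rintro ⟨s, hsS', hs⟩
    rw [hp] at hs
    have h1 : s - 1 = r - 1 := Nat.eq_of_mul_eq_mul_left (by omega) hs
    have h2 : 1 ≤ s := hS1' s hsS'
    have h3 : s = r := by omega
    exact hrS' (h3 ▸ hsS')
  -- equal prefixes
  have hpref : (List.ofFn fun i => (x i, eDel P S i)).take p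
      = (List.ofFn fun i => (x i, eDel P S' i)).take p := by
    apply List.ext_getElem (by simp)
    intro i h1 h2
    have hip : i < p := by simp at h1; omega
    have hin : i < n := by simp at h1; omega
    simp only [List.getElem_take, List.getElem_ofFn, Prod.mk.injEq]
    refine ⟨by trivial, ?_⟩
    simp only [eDel, decide_eq_decide, Fin.val_mk]
    constructor
    · rintro ⟨s, hsS, hs⟩
      have h1s : 1 ≤ s := hS1 s hsS
      have hlt : s < r := by
        by_contra hc
        have hmm : (3*P+5) * (r-1) ≤ (3*P+5) * (s-1) := Nat.mul_le_mul_left _ (by omega)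
        omega
      exact ⟨s, (hagree s hlt).1 hsS, hs⟩
    · rintro ⟨s, hsS, hs⟩
      have h1s : 1 ≤ s := hS1' s hsS
      have hlt : s < r := by
        by_contra hc
        have hmm : (3*P+5) * (r-1) ≤ (3*P+5) * (s-1) := Nat.mul_le_mul_left _ (by omega)
        omega
      exact ⟨s, (hagree s hlt).2 hsS, hs⟩
  show ((List.ofFn fun i => (x i, eDel P S i)).filter fun q => !q.2).map Prod.fst
      ≠ ((List.ofFn fun i => (x i, eDel P S' i)).filter fun q => !q.2).map Prod.fst
  apply distinguish _ _ p (by simpa using hp1) (by simpa using hp0) hpref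
  · rw [ofFn_getElem _ p hp0]
    exact heS_p
  · rw [ofFn_getElem _ (p+1) hp1]
    exact heS_p1
  · rw [ofFn_getElem _ p hp0]
    exact heS'_p
  · rw [ofFn_getElem _ (p+1) hp1, ofFn_getElem _ p hp0]
    show x ⟨p+1, hp1⟩ ≠ x ⟨p, hp0⟩
    rw [xv0, xv1]
    exact Bool.false_ne_true

/-- If `x` has at least `m` good 5-windows then `#N(x) ≥ 2^m`. -/
theorem stmt18 (n P : ℕ) (hP : 2 ≤ P) (hn : P ≤ n) (x : Fin n → Bool) (m : ℕ)
    (hm : m ≤ ((Finset.Icc 1 (n / (3 * P + 5))).filter fun r => goodWindow P x r).card) :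
    2 ^ m ≤ (Ndel n (3 * P) x).ncard := by
  classical
  set G := (Finset.Icc 1 (n / (3 * P + 5))).filter fun r => goodWindow P x r with hG
  have hGmem : ∀ s ∈ G, 1 ≤ s ∧ goodWindow P x s := by
    intro s hs
    rw [hG, Finset.mem_filter, Finset.mem_Icc] at hs
    exact ⟨hs.1.1, hs.2⟩
  have hinj : Set.InjOn (fun S : Finset ℕ => delCorrupt x (eDel P S (n := n)))
      ↑(G.powerset) := by
    intro S hS S' hS' heq
    simp only [Finset.coe_powerset, Set.mem_preimage, Set.mem_powerset_iff,
      Finset.coe_subset, Finset.mem_coe, Finset.mem_powerset] at hS hS'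
    by_contra hne
    have hT : ((S \ S') ∪ (S' \ S)).Nonempty := by
      rw [Finset.nonempty_iff_ne_empty]
      intro h
      apply hne
      apply Finset.ext
      intro t
      constructor <;> intro ht <;> by_contra hc
      · have : t ∈ (S \ S') ∪ (S' \ S) := Finset.mem_union_left _ (Finset.mem_sdiff.2 ⟨ht, hc⟩)
        rw [h] at this; exact absurd this (Finset.notMem_empty t)
      · have : t ∈ (S \ S') ∪ (S' \ S) := Finset.mem_union_right _ (Finset.mem_sdiff.2 ⟨ht, hc⟩)
        rw [h] at this; exact absurd this (Finset.notMem_empty t)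
    set r := ((S \ S') ∪ (S' \ S)).min' hT with hr
    have hrmem := Finset.min'_mem _ hT
    have hagree : ∀ s, s < r → (s ∈ S ↔ s ∈ S') := by
      intro s hsr
      constructor <;> intro hs <;> by_contra hc
      · have : s ∈ (S \ S') ∪ (S' \ S) := Finset.mem_union_left _ (Finset.mem_sdiff.2 ⟨hs, hc⟩)
        exact absurd (Finset.min'_le _ _ this) (by omega)
      · have : s ∈ (S \ S') ∪ (S' \ S) := Finset.mem_union_right _ (Finset.mem_sdiff.2 ⟨hs, hc⟩)
        exact absurd (Finset.min'_le _ _ this) (by omega)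
    have hS1 : ∀ s ∈ S, 1 ≤ s := fun s hs => (hGmem s (hS hs)).1
    have hS1' : ∀ s ∈ S', 1 ≤ s := fun s hs => (hGmem s (hS' hs)).1
    rw [Finset.mem_union, Finset.mem_sdiff, Finset.mem_sdiff] at hrmem
    rcases hrmem with ⟨hrS, hrS'⟩ | ⟨hrS', hrS⟩
    · exact corrupt_ne P x S S' hS1 hS1' r (hGmem r (hS hrS)).1 (hGmem r (hS hrS)).2
        hrS hrS' hagree heq
    · exact corrupt_ne P x S' S hS1' hS1 r (hGmem r (hS' hrS')).1 (hGmem r (hS' hrS')).2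
        hrS' hrS (fun s h => (hagree s h).symm) heq.symm
  have hcard : ((G.powerset).image fun S => delCorrupt x (eDel P S (n := n))).card
      = 2 ^ G.card := by
    rw [Finset.card_image_of_injOn hinj, Finset.card_powerset]
  have hsub : ↑((G.powerset).image fun S => delCorrupt x (eDel P S (n := n)))
      ⊆ Ndel n (3 * P) x := by
    intro w hw
    simp only [Finset.coe_image, Set.mem_image, Finset.mem_coe] at hw
    obtain ⟨S, _, rfl⟩ := hw
    exact ⟨eDel P S, eDel_pfar n P S, rfl⟩
  have hfin : (Ndel n (3 * P) x).Finite := by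
    apply Set.Finite.subset (Set.finite_range fun e : Fin n → Bool => delCorrupt x e)
    rintro w ⟨e, _, rfl⟩
    exact ⟨e, rfl⟩
  calc 2 ^ m ≤ 2 ^ G.card := Nat.pow_le_pow_right (by norm_num) hm
    _ = ((G.powerset).image fun S => delCorrupt x (eDel P S (n := n))).card := hcard.symm
    _ = (↑((G.powerset).image fun S => delCorrupt x (eDel P S (n := n))) :
          Set (List Bool)).ncard := (Set.ncard_coe_finset _).symm
    _ ≤ (Ndel n (3 * P) x).ncard := Set.ncard_le_ncard hsub hfin
end
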